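/- Let g : (X, ∂, ξ) → (Y, ∂', ξ') be a surjective morphism of precrossed B-modules of Lie algebras over a field k with kernel K = ker g. Then g maps the Peiffer commutator ⟨X, X⟩ into the Peiffer commutator ⟨Y, Y⟩; the induced map ḡ : X/⟨X, X⟩ → Y/⟨Y, Y⟩ between the quotient Lie algebras is surjective; and the kernel of ḡ equals the image of K under the quotient map X → X/⟨X, X⟩. (This is the exactness of the tail K/⟨K, X⟩ → X/⟨X, X⟩ → Y/⟨Y, Y⟩ → 0 of the five-term sequence of Lie algebra precrossed modules.) -/

import Mathlib

variable {k : Type*} [Field k]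
variable {B X Y : Type*} [LieRing B] [LieAlgebra k B]
  [LieRing X] [LieAlgebra k X] [LieRing Y] [LieAlgebra k Y]

/-- `(X, δ, ξ)` is a precrossed `B`-module of Lie algebras:
`ξ : B → Der(X)` is an action by derivations and `δ (ξ b x) = ⁅b, δ x⁆`. -/
def IsLiePrecrossedMod (δ : X →ₗ⁅k⁆ B) (ξ : B →ₗ⁅k⁆ LieDerivation k X X) : Prop :=
  ∀ (b : B) (x : X), δ (ξ b x) = ⁅b, δ x⁆

/-- A `B`-invariant set of elements of `X`. -/
def IsLieBInvariant (ξ : B →ₗ⁅k⁆ LieDerivation k X X) (M : Set X) : Prop :=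
  ∀ (b : B), ∀ m ∈ M, ξ b m ∈ M

/-- The Peiffer commutator `⟨M, N⟩`: the Lie ideal of `X` generated by the Peiffer
elements `⁅m, n⁆ - ξ (δ m) n` and `⁅n, m⁆ - ξ (δ n) m` for `m ∈ M`, `n ∈ N`. -/
def liePeiffer (δ : X →ₗ⁅k⁆ B) (ξ : B →ₗ⁅k⁆ LieDerivation k X X) (M N : Set X) :
    LieIdeal k X :=
  LieSubmodule.lieSpan k X
    ({y | ∃ m ∈ M, ∃ n ∈ N, y = ⁅m, n⁆ - ξ (δ m) n} ∪
     {y | ∃ m ∈ M, ∃ n ∈ N, y = ⁅n, m⁆ - ξ (δ n) m})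

/-- `f` is a morphism of precrossed `B`-modules of Lie algebras. -/
def IsLiePXModHom (δ : X →ₗ⁅k⁆ B) (ξ : B →ₗ⁅k⁆ LieDerivation k X X)
    (δ' : Y →ₗ⁅k⁆ B) (ξ' : B →ₗ⁅k⁆ LieDerivation k Y Y) (f : X →ₗ⁅k⁆ Y) : Prop :=
  (∀ x : X, δ' (f x) = δ x) ∧ ∀ (b : B) (x : X), f (ξ b x) = ξ' b (f x)

/-- for a surjective morphism `g : X → Y` of precrossed `B`-modules of
Lie algebras with kernel `K = ker g`, `g` maps `⟨X, X⟩` into `⟨Y, Y⟩`, the induced map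
`ḡ : X/⟨X, X⟩ → Y/⟨Y, Y⟩` is surjective, and its kernel is the image of `K` under the
quotient map `X → X/⟨X, X⟩`. -/
theorem lie_five_term_tail_exact
    (δ : X →ₗ⁅k⁆ B) (ξ : B →ₗ⁅k⁆ LieDerivation k X X) (hpre : IsLiePrecrossedMod δ ξ)
    (δ' : Y →ₗ⁅k⁆ B) (ξ' : B →ₗ⁅k⁆ LieDerivation k Y Y) (hpre' : IsLiePrecrossedMod δ' ξ')
    (g : X →ₗ⁅k⁆ Y) (hg : Function.Surjective g) (hghom : IsLiePXModHom δ ξ δ' ξ' g) :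
    (∀ x ∈ liePeiffer δ ξ Set.univ Set.univ, g x ∈ liePeiffer δ' ξ' Set.univ Set.univ) ∧
    ∃ gbar : (X ⧸ liePeiffer δ ξ Set.univ Set.univ) →ₗ⁅k⁆
        (Y ⧸ liePeiffer δ' ξ' Set.univ Set.univ),
      (∀ x : X, gbar (LieSubmodule.Quotient.mk (N := liePeiffer δ ξ Set.univ Set.univ) x) =
        LieSubmodule.Quotient.mk (N := liePeiffer δ' ξ' Set.univ Set.univ) (g x)) ∧
      Function.Surjective gbar ∧
      ∀ q : X ⧸ liePeiffer δ ξ Set.univ Set.univ,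
        gbar q = 0 ↔ ∃ x ∈ g.ker,
          LieSubmodule.Quotient.mk (N := liePeiffer δ ξ Set.univ Set.univ) x = q := by
  classical
  set I := liePeiffer δ ξ Set.univ Set.univ with hI
  set J := liePeiffer δ' ξ' Set.univ Set.univ with hJ
  obtain ⟨hδ, hξ⟩ := hghom
  -- generators of I map to generators of J
  have hgen : ({y | ∃ m ∈ (Set.univ : Set X), ∃ n ∈ Set.univ, y = ⁅m, n⁆ - ξ (δ m) n} ∪
      {y | ∃ m ∈ (Set.univ : Set X), ∃ n ∈ Set.univ, y = ⁅n, m⁆ - ξ (δ n) m}) ⊆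
      {x : X | g x ∈ J} := by
    rintro y (⟨m, -, n, -, rfl⟩ | ⟨m, -, n, -, rfl⟩)
    · have : g (⁅m, n⁆ - ξ (δ m) n) = ⁅g m, g n⁆ - ξ' (δ' (g m)) (g n) := by
        rw [map_sub g, LieHom.map_lie, hξ, hδ]
      rw [Set.mem_setOf_eq, this]
      exact LieSubmodule.subset_lieSpan (Or.inl ⟨g m, trivial, g n, trivial, rfl⟩)
    · have : g (⁅n, m⁆ - ξ (δ n) m) = ⁅g n, g m⁆ - ξ' (δ' (g n)) (g m) := by
        rw [map_sub g, LieHom.map_lie, hξ, hδ]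
      rw [Set.mem_setOf_eq, this]
      exact LieSubmodule.subset_lieSpan (Or.inr ⟨g m, trivial, g n, trivial, rfl⟩)
  have hmap : ∀ x ∈ I, g x ∈ J := by
    have : I ≤ LieIdeal.comap g J := LieSubmodule.lieSpan_le.mpr hgen
    exact fun x hx => LieIdeal.mem_comap.mp (this hx)
  -- J is contained in the image of I
  have hJle : J ≤ LieIdeal.map g I := by
    apply LieSubmodule.lieSpan_le.mpr
    rintro y (⟨m', -, n', -, rfl⟩ | ⟨m', -, n', -, rfl⟩)
    · obtain ⟨m, rfl⟩ := hg m'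
      obtain ⟨n, rfl⟩ := hg n'
      have hx : (⁅m, n⁆ - ξ (δ m) n) ∈ I :=
        LieSubmodule.subset_lieSpan (Or.inl ⟨m, trivial, n, trivial, rfl⟩)
      have : g (⁅m, n⁆ - ξ (δ m) n) = ⁅g m, g n⁆ - ξ' (δ' (g m)) (g n) := by
        rw [map_sub g, LieHom.map_lie, hξ, hδ]
      rw [← this]
      exact LieIdeal.mem_map hx
    · obtain ⟨m, rfl⟩ := hg m'
      obtain ⟨n, rfl⟩ := hg n'
      have hx : (⁅n, m⁆ - ξ (δ n) m) ∈ I :=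
        LieSubmodule.subset_lieSpan (Or.inr ⟨m, trivial, n, trivial, rfl⟩)
      have : g (⁅n, m⁆ - ξ (δ n) m) = ⁅g n, g m⁆ - ξ' (δ' (g n)) (g m) := by
        rw [map_sub g, LieHom.map_lie, hξ, hδ]
      rw [← this]
      exact LieIdeal.mem_map hx
  refine ⟨hmap, ?_⟩
  -- construct the induced map
  have hle : (I : Submodule k X) ≤ (J : Submodule k Y).comap g.toLinearMap := fun x hx =>
    hmap x hx
  let ℓ : (X ⧸ I) →ₗ[k] (Y ⧸ J) :=
    Submodule.mapQ (I : Submodule k X) (J : Submodule k Y) g.toLinearMap hle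
  have hℓ : ∀ x : X, ℓ (LieSubmodule.Quotient.mk (N := I) x) =
      LieSubmodule.Quotient.mk (N := J) (g x) := fun x => rfl
  let gbar : (X ⧸ I) →ₗ⁅k⁆ (Y ⧸ J) :=
    { ℓ with
      map_lie' := by
        intro q r
        induction q using Quotient.inductionOn' with
        | h x =>
          induction r using Quotient.inductionOn' with
          | h y =>
            show ℓ ⁅LieSubmodule.Quotient.mk (N := I) x, LieSubmodule.Quotient.mk (N := I) y⁆
              = ⁅ℓ (LieSubmodule.Quotient.mk (N := I) x), ℓ (LieSubmodule.Quotient.mk (N := I) y)⁆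
            rw [← LieSubmodule.Quotient.mk_bracket, hℓ, hℓ, hℓ, LieHom.map_lie,
              LieSubmodule.Quotient.mk_bracket] }
  refine ⟨gbar, hℓ, ?_, ?_⟩
  · intro q
    induction q using Quotient.inductionOn' with
    | h y =>
      obtain ⟨x, rfl⟩ := hg y
      exact ⟨LieSubmodule.Quotient.mk (N := I) x, hℓ x⟩
  · intro q
    induction q using Quotient.inductionOn' with
    | h x =>
      constructor
      · intro h0
        have : g x ∈ J := by
          have := (LieSubmodule.Quotient.mk_eq_zero' (N := J) (m := g x)).mp (by
            rw [← hℓ x]; exact h0)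
          exact this
        obtain ⟨⟨p, hpI⟩, hp⟩ := LieIdeal.mem_map_of_surjective hg (hJle this)
        have hp' : g p = g x := hp
        refine ⟨x - p, ?_, ?_⟩
        · rw [LieHom.mem_ker, map_sub g, hp', sub_self]
        · exact (Submodule.Quotient.eq (I : Submodule k X)).2
            (by rw [sub_sub_cancel_left]; exact neg_mem hpI)
      · rintro ⟨z, hz, hq⟩
        have hz0 : g z = 0 := hz
        rw [← hq, show gbar (LieSubmodule.Quotient.mk (N := I) z)
            = LieSubmodule.Quotient.mk (N := J) (g z) from hℓ z, hz0]
        simp
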